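/- Let μ, ν ∈ ℝ, λ ∈ ℂ, and consider the quadratic equation s² + μ·s − (λ − ν) = 0 over ℂ. If 16·μ²·(Re λ − ν) + (Im λ)² > 0, then this quadratic has one root with strictly positive real part and one root with strictly negative real part. -/

import Mathlib

set_option maxHeartbeats 1000000 in
theorem stmt_1 (μ ν : ℝ) (lam : ℂ)
    (h : 16 * μ^2 * (lam.re - ν) + lam.im^2 > 0) :
    ∃ s₁ s₂ : ℂ,
      s₁^2 + (μ : ℂ) * s₁ - (lam - (ν : ℂ)) = 0 ∧
      s₂^2 + (μ : ℂ) * s₂ - (lam - (ν : ℂ)) = 0 ∧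
      0 < s₁.re ∧ s₂.re < 0 := by
  set D : ℂ := (μ:ℂ)^2 + 4*(lam - (ν:ℂ)) with hD
  have hDre : D.re = μ^2 + 4*(lam.re - ν) := by
    rw [hD]; simp [pow_two, Complex.mul_re, Complex.mul_im]
  have hDim : D.im = 4 * lam.im := by
    rw [hD]; simp [pow_two, Complex.mul_re, Complex.mul_im]
  set A : ℝ := ‖D‖ with hA
  have hAre : |D.re| ≤ A := Complex.abs_re_le_norm D
  have hA0 : 0 ≤ A := norm_nonneg D
  obtain ⟨hAre1, hAre2⟩ := abs_le.mp hAre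
  set x : ℝ := Real.sqrt ((A + D.re)/2) with hx
  set sgn : ℝ := if 0 ≤ D.im then 1 else -1 with hsgn
  set y : ℝ := sgn * Real.sqrt ((A - D.re)/2) with hy
  have h1 : 0 ≤ (A + D.re)/2 := by linarith
  have h2 : 0 ≤ (A - D.re)/2 := by linarith
  have hx0 : 0 ≤ x := Real.sqrt_nonneg _
  have hx2 : x^2 = (A + D.re)/2 := Real.sq_sqrt h1
  have hy2 : y^2 = (A - D.re)/2 := by
    have hs2 : sgn^2 = 1 := by rw [hsgn]; split <;> norm_num
    rw [hy, mul_pow, hs2, one_mul, Real.sq_sqrt h2]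
  have hA2 : A^2 = D.re^2 + D.im^2 := by
    rw [hA, Complex.sq_norm, Complex.normSq_apply]; ring
  have hxy : 2*x*y = D.im := by
    have hm : x * Real.sqrt ((A - D.re)/2)
        = Real.sqrt (((A+D.re)/2)*((A-D.re)/2)) :=
      (Real.sqrt_mul h1 _).symm
    have hprod : ((A+D.re)/2)*((A-D.re)/2) = (D.im/2)^2 := by nlinarith [hA2]
    have hm2 : x * Real.sqrt ((A - D.re)/2) = |D.im|/2 := by
      rw [hm, hprod, Real.sqrt_sq_eq_abs, abs_div]
      norm_num
    rw [hy, hsgn]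
    split_ifs with hs
    · rw [abs_of_nonneg hs] at hm2; linarith [hm2]
    · push_neg at hs
      rw [abs_of_neg hs] at hm2; linarith [hm2]
  clear_value D A x sgn y
  rw [hDre, hDim] at hA2
  have hAkey : A > μ^2 - 4*(lam.re - ν) := by
    by_contra hc
    push_neg at hc
    nlinarith [sq_nonneg lam.im, hA2, h, mul_self_le_mul_self hA0 hc]
  have hxgt : x^2 > μ^2 := by
    rw [hx2, hDre]; linarith
  have hxabs : |μ| < x := by
    nlinarith [abs_nonneg μ, sq_abs μ]
  have hxμ : μ < x := lt_of_le_of_lt (le_abs_self μ) hxabs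
  have hxnμ : -μ < x := lt_of_le_of_lt (neg_le_abs μ) hxabs
  obtain ⟨w, hwre, hwim⟩ : ∃ w : ℂ, w.re = x ∧ w.im = y := ⟨⟨x, y⟩, rfl, rfl⟩
  have hw2 : w^2 = D := by
    apply Complex.ext
    · simp only [pow_two, Complex.mul_re, hwre, hwim]
      nlinarith [hx2, hy2]
    · simp only [pow_two, Complex.mul_im, hwre, hwim]
      linarith [hxy]
  refine ⟨(-(μ:ℂ) + w)/((2:ℝ):ℂ), (-(μ:ℂ) - w)/((2:ℝ):ℂ), ?_, ?_, ?_, ?_⟩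
  · have h2c : ((2:ℝ):ℂ) ≠ 0 := by norm_num
    field_simp
    push_cast
    linear_combination hw2 + hD
  · have h2c : ((2:ℝ):ℂ) ≠ 0 := by norm_num
    field_simp
    push_cast
    linear_combination hw2 + hD
  · rw [Complex.div_ofReal_re]
    simp only [Complex.add_re, Complex.neg_re, Complex.ofReal_re, hwre]
    linarith
  · rw [Complex.div_ofReal_re]
    simp only [Complex.sub_re, Complex.neg_re, Complex.ofReal_re, hwre]
    linarith
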